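/- arXiv:1612.03677 — 3 statements merged into one kernel-verified Lean document; each statement's English description precedes it below -/
import Mathlib

section
/- Let 0 < r < 1 and 1 ≤ p < ∞. The inclusion ℓ_p ⊆ t_p^r holds: if ∑_k |x_k|^p < ∞ then the sequence y_n = ∑_{k=n}^∞ C(k,n)(1-r)^{n+1} r^{k-n} x_k is well-defined and ∑_n |y_n|^p < ∞. -/
noncomputable def taylorEntry (r : ℝ) (n k : ℕ) : ℝ :=
  if n ≤ k then (k.choose n : ℝ) * (1 - r) ^ (n + 1) * r ^ (k - n) else 0

noncomputable def taylorTransform (r : ℝ) (x : ℕ → ℝ) (n : ℕ) : ℝ :=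
  ∑' k, taylorEntry r n k * x k

/-- The Taylor sequence space `t_p^r`. -/
def TaylorLp (r p : ℝ) : Set (ℕ → ℝ) :=
  {x | (∀ n, Summable fun k => |taylorEntry r n k * x k|) ∧
    Summable fun n => |taylorTransform r x n| ^ p}

lemma taylorEntry_nonneg {r : ℝ} (hr0 : 0 < r) (hr1 : r < 1) (n k : ℕ) :
    0 ≤ taylorEntry r n k := by
  unfold taylorEntry
  split
  · exact mul_nonneg (mul_nonneg (Nat.cast_nonneg _) (pow_nonneg (by linarith) _))
      (pow_nonneg hr0.le _)
  · exact le_refl 0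

/-- Row sums of the Taylor matrix are `1`. -/
lemma taylorEntry_row_hasSum {r : ℝ} (hr0 : 0 < r) (hr1 : r < 1) (n : ℕ) :
    HasSum (fun k => taylorEntry r n k) 1 := by
  have hr : ‖r‖ < 1 := by rw [Real.norm_eq_abs, abs_of_pos hr0]; exact hr1
  have key : HasSum (fun j => taylorEntry r n (j + n)) 1 := by
    have h := (hasSum_choose_mul_geometric_of_norm_lt_one n hr).mul_left ((1 - r) ^ (n + 1))
    have hval : (1 - r) ^ (n + 1) * (1 / (1 - r) ^ (n + 1)) = 1 := by
      have hne : (1 - r) ^ (n + 1) ≠ 0 := pow_ne_zero _ (by linarith)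
      field_simp
    rw [hval] at h
    convert h using 2 with j
    · rfl
    unfold taylorEntry
    rw [if_pos (Nat.le_add_left n _)]
    have hj : j + n - n = j := by omega
    rw [hj]; ring
  have h0 : ∑ i ∈ Finset.range n, taylorEntry r n i = 0 := by
    apply Finset.sum_eq_zero
    intro i hi
    rw [Finset.mem_range] at hi
    unfold taylorEntry
    rw [if_neg (by omega)]
  have := (hasSum_nat_add_iff n).mp key
  rwa [h0, add_zero] at this

/-- Column sums of the Taylor matrix are `1 - r`. -/
lemma taylorEntry_col_hasSum {r : ℝ} (hr0 : 0 < r) (hr1 : r < 1) (k : ℕ) :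
    HasSum (fun n => taylorEntry r n k) (1 - r) := by
  have h0 : ∀ n ∉ Finset.range (k + 1), taylorEntry r n k = 0 := by
    intro n hn
    rw [Finset.mem_range] at hn
    unfold taylorEntry
    rw [if_neg (by omega)]
  have h := hasSum_sum_of_ne_finset_zero (L := SummationFilter.unconditional ℕ) h0
  have hsum : ∑ n ∈ Finset.range (k + 1), taylorEntry r n k = 1 - r := by
    have h1 : ∀ n ∈ Finset.range (k + 1), taylorEntry r n k
        = (1 - r) * ((1 - r) ^ n * r ^ (k - n) * (k.choose n : ℝ)) := by
      intro n hn
      rw [Finset.mem_range] at hn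
      unfold taylorEntry
      rw [if_pos (by omega)]
      ring
    rw [Finset.sum_congr rfl h1, ← Finset.mul_sum, ← add_pow]
    norm_num
  rwa [hsum] at h

set_option maxHeartbeats 800000 in
/-- Jensen's inequality for infinite sums with subprobability weights. -/
lemma tsum_jensen {w t : ℕ → ℝ} {p : ℝ} (hp : 1 ≤ p)
    (hw0 : ∀ k, 0 ≤ w k) (ht0 : ∀ k, 0 ≤ t k)
    (hw : Summable w) (hw1 : ∑' k, w k ≤ 1)
    (hwt : Summable fun k => w k * t k)
    (hwtp : Summable fun k => w k * t k ^ p) :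
    (∑' k, w k * t k) ^ p ≤ ∑' k, w k * t k ^ p := by
  have hp0 : (0:ℝ) ≤ p := by linarith
  have hrhs0 : ∀ k, 0 ≤ w k * t k ^ p :=
    fun k => mul_nonneg (hw0 k) (Real.rpow_nonneg (ht0 k) p)
  have key : ∀ s : Finset ℕ, (∑ i ∈ s, w i * t i) ^ p ≤ ∑' k, w k * t k ^ p := by
    intro s
    obtain ⟨j, hj⟩ := Infinite.exists_notMem_finset s
    set W : ℕ → ℝ := fun i => if i = j then 1 - ∑ i ∈ s, w i else w i with hW
    set Z : ℕ → ℝ := fun i => if i = j then 0 else t i with hZ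
    have hswle : ∑ i ∈ s, w i ≤ 1 := le_trans (Summable.sum_le_tsum s (fun i _ => hw0 i) hw) hw1
    have hWs : ∀ i ∈ s, W i = w i := by
      intro i hi
      simp only [hW]
      rw [if_neg (by rintro rfl; exact hj hi)]
    have hZs : ∀ i ∈ s, Z i = t i := by
      intro i hi
      simp only [hZ]
      rw [if_neg (by rintro rfl; exact hj hi)]
    have hW0 : ∀ i ∈ insert j s, 0 ≤ W i := by
      intro i _
      simp only [hW]
      split
      · linarith
      · exact hw0 i
    have hZ0 : ∀ i ∈ insert j s, 0 ≤ Z i := by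
      intro i _
      simp only [hZ]
      split
      · exact le_refl 0
      · exact ht0 i
    have hW1 : ∑ i ∈ insert j s, W i = 1 := by
      rw [Finset.sum_insert hj, Finset.sum_congr rfl hWs]
      simp only [hW, if_pos rfl]
      ring
    have hJ := Real.rpow_arith_mean_le_arith_mean_rpow (insert j s) W Z hW0 hW1 hZ0 hp
    have hLHS : ∑ i ∈ insert j s, W i * Z i = ∑ i ∈ s, w i * t i := by
      rw [Finset.sum_insert hj]
      simp only [hZ, if_pos rfl, mul_zero, zero_add]
      refine Finset.sum_congr rfl fun i hi => ?_
      have hij : i ≠ j := fun h => hj (h ▸ hi)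
      simp [hW, hZ, hij]
    have hRHS : ∑ i ∈ insert j s, W i * Z i ^ p = ∑ i ∈ s, w i * t i ^ p := by
      rw [Finset.sum_insert hj]
      simp only [hZ, if_pos rfl]
      rw [Real.zero_rpow (by linarith), mul_zero, zero_add]
      refine Finset.sum_congr rfl fun i hi => ?_
      have hij : i ≠ j := fun h => hj (h ▸ hi)
      simp [hW, hZ, hij]
    rw [hLHS, hRHS] at hJ
    exact le_trans hJ (Summable.sum_le_tsum s (fun i _ => hrhs0 i) hwtp)
  have hcont : ContinuousAt (fun y : ℝ => y ^ p) (∑' k, w k * t k) :=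
    Real.continuousAt_rpow_const _ p (Or.inr hp0)
  exact le_of_tendsto (hcont.tendsto.comp hwt.hasSum) (Filter.Eventually.of_forall key)

set_option maxHeartbeats 800000 in
/-- For `0 < r < 1` and `1 ≤ p < ∞`, the inclusion `ℓ_p ⊆ t_p^r` holds : if
`∑_k |x_k|^p < ∞`, then the Taylor transform of `x` is well defined and lies in `ℓ_p`. -/
theorem lp_subset_taylorLp (r p : ℝ) (hr0 : 0 < r) (hr1 : r < 1) (hp : 1 ≤ p)
    (x : ℕ → ℝ) (hx : Summable fun k => |x k| ^ p) :
    x ∈ TaylorLp r p := by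
  have hp0 : (0:ℝ) ≤ p := by linarith
  have hE0 : ∀ n k, 0 ≤ taylorEntry r n k := taylorEntry_nonneg hr0 hr1
  have hrow : ∀ n, HasSum (fun k => taylorEntry r n k) 1 :=
    taylorEntry_row_hasSum hr0 hr1
  have hcol : ∀ k, HasSum (fun n => taylorEntry r n k) (1 - r) :=
    taylorEntry_col_hasSum hr0 hr1
  -- entries are at most 1
  have hE1 : ∀ n k, taylorEntry r n k ≤ 1 := by
    intro n k
    have := Summable.le_tsum (hrow n).summable k (fun j _ => hE0 n j)
    rwa [(hrow n).tsum_eq] at this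
  -- pointwise bound |x k| ≤ 1 + |x k| ^ p
  have hxb : ∀ k, |x k| ≤ 1 + |x k| ^ p := by
    intro k
    rcases le_or_gt (|x k|) 1 with h | h
    · have : (0:ℝ) ≤ |x k| ^ p := Real.rpow_nonneg (abs_nonneg _) p
      linarith
    · have h2 := Real.rpow_le_rpow_of_exponent_le h.le hp
      rw [Real.rpow_one] at h2
      linarith
  -- summability of the weighted p-th powers in each row
  have hwp : ∀ n, Summable fun k => taylorEntry r n k * |x k| ^ p := by
    intro n
    apply Summable.of_nonneg_of_le
      (fun k => mul_nonneg (hE0 n k) (Real.rpow_nonneg (abs_nonneg _) p)) _ hx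
    intro k
    calc taylorEntry r n k * |x k| ^ p ≤ 1 * |x k| ^ p :=
          mul_le_mul_of_nonneg_right (hE1 n k) (Real.rpow_nonneg (abs_nonneg _) p)
      _ = |x k| ^ p := one_mul _
  -- Part 1: each row of the transform is absolutely summable
  have part1 : ∀ n, Summable fun k => |taylorEntry r n k * x k| := by
    intro n
    apply Summable.of_nonneg_of_le (fun k => abs_nonneg _)
      (f := fun k => taylorEntry r n k + taylorEntry r n k * |x k| ^ p)
    · intro k
      rw [abs_mul, abs_of_nonneg (hE0 n k)]
      calc taylorEntry r n k * |x k| ≤ taylorEntry r n k * (1 + |x k| ^ p) :=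
            mul_le_mul_of_nonneg_left (hxb k) (hE0 n k)
        _ = taylorEntry r n k + taylorEntry r n k * |x k| ^ p := by ring
    · exact (hrow n).summable.add (hwp n)
  refine ⟨part1, ?_⟩
  -- row summability of the weighted absolute values
  have hwabs : ∀ n, Summable fun k => taylorEntry r n k * |x k| := by
    intro n
    have := part1 n
    refine this.congr fun k => ?_
    rw [abs_mul, abs_of_nonneg (hE0 n k)]
  -- |taylorTransform| bounded by weighted absolute sum
  have habs : ∀ n, |taylorTransform r x n| ≤ ∑' k, taylorEntry r n k * |x k| := by
    intro n
    have h1 : |taylorTransform r x n| ≤ ∑' k, |taylorEntry r n k * x k| := by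
      have := norm_tsum_le_tsum_norm (f := fun k => taylorEntry r n k * x k)
        (by simpa only [Real.norm_eq_abs] using part1 n)
      simpa only [Real.norm_eq_abs, taylorTransform] using this
    refine le_trans h1 (le_of_eq (tsum_congr fun k => ?_))
    rw [abs_mul, abs_of_nonneg (hE0 n k)]
  -- Jensen
  have hJen : ∀ n, (∑' k, taylorEntry r n k * |x k|) ^ p
      ≤ ∑' k, taylorEntry r n k * |x k| ^ p := by
    intro n
    exact tsum_jensen hp (hE0 n) (fun k => abs_nonneg _) (hrow n).summable
      (le_of_eq (hrow n).tsum_eq) (hwabs n) (hwp n)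
  -- summability of the double family (k, n) ↦ a n k * |x k|^p
  have hf0 : (0:ℕ × ℕ → ℝ) ≤ fun q : ℕ × ℕ => taylorEntry r q.2 q.1 * |x q.1| ^ p :=
    fun q => mul_nonneg (hE0 q.2 q.1) (Real.rpow_nonneg (abs_nonneg _) p)
  have hdouble : Summable fun q : ℕ × ℕ => taylorEntry r q.2 q.1 * |x q.1| ^ p := by
    rw [summable_prod_of_nonneg hf0]
    constructor
    · intro k
      have h := (hcol k).summable.mul_right (|x k| ^ p)
      exact h
    · refine ((hx.mul_left (1 - r))).congr fun k => ?_
      show (1 - r) * |x k| ^ p = ∑' nn, taylorEntry r nn k * |x k| ^ p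
      rw [tsum_mul_right, (hcol k).tsum_eq]
  have hswap : Summable fun q : ℕ × ℕ => taylorEntry r q.1 q.2 * |x q.2| ^ p := by
    have := hdouble.prod_symm
    exact this.congr fun q => rfl
  have hv : Summable fun n => ∑' k, taylorEntry r n k * |x k| ^ p := by
    have h0 : (0:ℕ × ℕ → ℝ) ≤ fun q : ℕ × ℕ => taylorEntry r q.1 q.2 * |x q.2| ^ p :=
      fun q => mul_nonneg (hE0 q.1 q.2) (Real.rpow_nonneg (abs_nonneg _) p)
    exact ((summable_prod_of_nonneg h0).mp hswap).2
  -- conclude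
  apply Summable.of_nonneg_of_le (fun n => Real.rpow_nonneg (abs_nonneg _) p) _ hv
  intro n
  calc |taylorTransform r x n| ^ p
      ≤ (∑' k, taylorEntry r n k * |x k|) ^ p :=
        Real.rpow_le_rpow (abs_nonneg _) (habs n) hp0
    _ ≤ ∑' k, taylorEntry r n k * |x k| ^ p := hJen n
end

section
/- Let 0 < r < 1 and 1 ≤ p < ∞. The inclusion ℓ_p ⊆ t_p^r is strict: there exists a sequence x with T(r)x ∈ ℓ_p but x ∉ ℓ_p. -/
lemma taylor_aux_inj (n : ℕ) : Function.Injective (fun j : ℕ => n + j) :=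
  fun a b h => by simpa using h

lemma taylor_aux_vanish (r : ℝ) (n : ℕ) (x : ℕ → ℝ) :
    ∀ k ∉ Set.range (fun j : ℕ => n + j), taylorEntry r n k * x k = 0 := by
  intro k hk
  have hkn : k < n := by
    by_contra h
    exact hk ⟨k - n, show n + (k - n) = k by omega⟩
  simp [taylorEntry, Nat.not_le.mpr hkn]

lemma taylor_row_hasSum (r : ℝ) (hr0 : 0 < r) (hr1 : r < 1) (n : ℕ) :
    HasSum (fun k => taylorEntry r n k * (-1 : ℝ) ^ k)
      ((-1 : ℝ) ^ n * ((1 - r) / (1 + r)) ^ (n + 1)) := by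
  have hr' : ‖(-r : ℝ)‖ < 1 := by
    rw [norm_neg, Real.norm_eq_abs, abs_of_pos hr0]; exact hr1
  have h := (hasSum_choose_mul_geometric_of_norm_lt_one (𝕜 := ℝ) n hr').mul_left
    ((1 - r) ^ (n + 1) * (-1 : ℝ) ^ n)
  have hco : ((fun k => taylorEntry r n k * (-1 : ℝ) ^ k) ∘ (fun j : ℕ => n + j))
      = fun j => (1 - r) ^ (n + 1) * (-1 : ℝ) ^ n * (((j + n).choose n : ℝ) * (-r) ^ j) := by
    funext j
    have hn : n ≤ n + j := Nat.le_add_right n j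
    simp only [Function.comp_apply, taylorEntry, if_pos hn, Nat.add_sub_cancel_left]
    rw [show ((j + n).choose n : ℝ) = ((n + j).choose n : ℝ) by rw [Nat.add_comm j n],
      show ((-1 : ℝ)) ^ (n + j) = (-1 : ℝ) ^ n * (-1 : ℝ) ^ j from pow_add _ _ _,
      show ((-r : ℝ)) ^ j = (-1 : ℝ) ^ j * r ^ j by rw [neg_pow]]
    ring
  have hval : (1 - r) ^ (n + 1) * (-1 : ℝ) ^ n * (1 / (1 - -r) ^ (n + 1))
      = (-1 : ℝ) ^ n * ((1 - r) / (1 + r)) ^ (n + 1) := by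
    have h1 : (1 : ℝ) + r ≠ 0 := by positivity
    rw [div_pow]
    field_simp
    ring
  rw [← hco, hval] at h
  exact ((taylor_aux_inj n).hasSum_iff (taylor_aux_vanish r n _)).mp h

lemma taylor_row_abs_summable (r : ℝ) (hr0 : 0 < r) (hr1 : r < 1) (n : ℕ) :
    Summable (fun k => |taylorEntry r n k * (-1 : ℝ) ^ k|) := by
  have hr' : ‖r‖ < 1 := by rw [Real.norm_eq_abs, abs_of_pos hr0]; exact hr1
  have h := (summable_choose_mul_geometric_of_norm_lt_one (R := ℝ) n hr').mul_left
    ((1 - r) ^ (n + 1))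
  refine ((taylor_aux_inj n).summable_iff ?_).mp ?_
  · intro k hk
    rw [taylor_aux_vanish r n _ k hk, abs_zero]
  · convert h using 1
    · rfl
    funext j
    have hn : n ≤ n + j := Nat.le_add_right n j
    have h0 : (0:ℝ) ≤ ((n + j).choose n : ℝ) * (1 - r) ^ (n + 1) * r ^ j := by
      have : (0:ℝ) < 1 - r := by linarith
      positivity
    simp only [Function.comp_apply, taylorEntry, if_pos hn, Nat.add_sub_cancel_left]
    rw [abs_mul, abs_of_nonneg h0, abs_pow, abs_neg, abs_one, one_pow, mul_one,
      show ((n + j).choose n : ℝ) = ((j + n).choose n : ℝ) by rw [Nat.add_comm n j]]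
    ring

/-- For `0 < r < 1` and `1 ≤ p < ∞`, the inclusion `ℓ_p ⊆ t_p^r` is strict : there is a
sequence `x ∈ t_p^r` (i.e. `T(r)x ∈ ℓ_p`) with `x ∉ ℓ_p`. -/
theorem lp_subset_taylorLp_strict (r p : ℝ) (hr0 : 0 < r) (hr1 : r < 1) (hp : 1 ≤ p) :
    ∃ x : ℕ → ℝ, x ∈ TaylorLp r p ∧ ¬ Summable fun k => |x k| ^ p := by
  refine ⟨fun k => (-1 : ℝ) ^ k, ⟨fun n => taylor_row_abs_summable r hr0 hr1 n, ?_⟩, ?_⟩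
  · -- transform summability
    set q : ℝ := (1 - r) / (1 + r) with hq
    have hq0 : 0 < q := by
      apply div_pos <;> linarith
    have hq1 : q < 1 := by
      rw [hq, div_lt_one (by linarith)]
      linarith
    have htr : ∀ n, taylorTransform r (fun k => (-1 : ℝ) ^ k) n = (-1 : ℝ) ^ n * q ^ (n + 1) :=
      fun n => (taylor_row_hasSum r hr0 hr1 n).tsum_eq
    have habs : ∀ n, |taylorTransform r (fun k => (-1 : ℝ) ^ k) n| ^ p = (q ^ p) ^ (n + 1) := by
      intro n
      rw [htr n, abs_mul, abs_pow, abs_neg, abs_one, one_pow, one_mul,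
        abs_of_pos (pow_pos hq0 _), ← Real.rpow_natCast q (n + 1),
        ← Real.rpow_natCast (q ^ p) (n + 1), ← Real.rpow_mul hq0.le,
        ← Real.rpow_mul hq0.le, mul_comm]
    rw [funext habs]
    have hqp1 : q ^ p < 1 := Real.rpow_lt_one hq0.le hq1 (by linarith)
    have hqp0 : 0 ≤ q ^ p := Real.rpow_nonneg hq0.le p
    exact ((summable_geometric_of_lt_one hqp0 hqp1).mul_right (q ^ p)).congr
      (fun n => (pow_succ _ _).symm)
  · -- non-summability
    intro h
    have hone : (fun k => |(-1 : ℝ) ^ k| ^ p) = fun _ => (1 : ℝ) := by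
      funext k
      rw [abs_pow, abs_neg, abs_one, one_pow, Real.one_rpow]
    rw [hone] at h
    have := h.tendsto_atTop_zero
    have h1 : Filter.Tendsto (fun _ : ℕ => (1:ℝ)) Filter.atTop (nhds 1) := tendsto_const_nhds
    exact one_ne_zero (tendsto_nhds_unique h1 this)
end

section
/- Let 0 < r < 1 and 1 ≤ p < ∞. Neither of the inclusions t_p^r ⊆ ℓ_∞ nor ℓ_∞ ⊆ t_p^r holds: there exists a bounded sequence x with T(r)x ∉ ℓ_p, and there exists an unbounded sequence x with T(r)x ∈ ℓ_p. -/
lemma taylor_hasSum (r s : ℝ) (hs : |r * s| < 1) (n : ℕ) :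
    HasSum (fun k => taylorEntry r n k * s ^ k)
      (s ^ n * (1 - r) ^ (n + 1) * (1 / (1 - r * s) ^ (n + 1))) := by
  have h1 := (hasSum_choose_mul_geometric_of_norm_lt_one (𝕜 := ℝ) n
      (by rwa [Real.norm_eq_abs])).mul_left (s ^ n * (1 - r) ^ (n + 1))
  have h2 : (fun k => (s ^ n * (1 - r) ^ (n + 1)) * (((k + n).choose n : ℝ) * (r * s) ^ k))
      = fun k => taylorEntry r n (k + n) * s ^ (k + n) := by
    funext k
    simp only [taylorEntry, if_pos (Nat.le_add_left n k), Nat.add_sub_cancel, mul_pow, pow_add]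
    ring
  rw [h2] at h1
  rw [← hasSum_nat_add_iff' (f := fun k => taylorEntry r n k * s ^ k) n]
  have hz : ∑ i ∈ Finset.range n, taylorEntry r n i * s ^ i = 0 := by
    apply Finset.sum_eq_zero
    intro i hi
    simp only [Finset.mem_range] at hi
    simp [taylorEntry, if_neg (by omega : ¬ n ≤ i)]
  rw [hz, sub_zero]
  exact h1

lemma taylor_abs_summable (r s : ℝ) (hr0 : 0 ≤ r) (hs : |r * s| < 1) (n : ℕ) :
    Summable fun k => |taylorEntry r n k * s ^ k| := by
  rw [← summable_nat_add_iff n]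
  have hrs : ‖r * |s|‖ < 1 := by
    rw [Real.norm_eq_abs, abs_mul, abs_abs, abs_of_nonneg hr0, ← abs_of_nonneg hr0, ← abs_mul]
    exact hs
  have h1 := (summable_choose_mul_geometric_of_norm_lt_one (R := ℝ) n hrs).mul_left
      (|1 - r| ^ (n + 1) * |s| ^ n)
  apply h1.congr
  intro k
  simp only [taylorEntry, if_pos (Nat.le_add_left n k), Nat.add_sub_cancel, abs_mul,
    abs_pow, Nat.abs_cast, mul_pow, pow_add, abs_of_nonneg hr0]
  ring

/-- For `0 < r < 1` and `1 ≤ p < ∞`, neither of `t_p^r ⊆ ℓ_∞` and `ℓ_∞ ⊆ t_p^r` holds :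
there is a bounded sequence whose Taylor transform (which is well defined for bounded
sequences) is not in `ℓ_p`, and there is an unbounded sequence belonging to `t_p^r`. -/
theorem taylorLp_linf_incomparable (r p : ℝ) (hr0 : 0 < r) (hr1 : r < 1) (hp : 1 ≤ p) :
    (∃ x : ℕ → ℝ, (∃ C : ℝ, ∀ k, |x k| ≤ C) ∧
        (∀ n, Summable fun k => |taylorEntry r n k * x k|) ∧
        ¬ Summable fun n => |taylorTransform r x n| ^ p) ∧
      (∃ x : ℕ → ℝ, (¬ ∃ C : ℝ, ∀ k, |x k| ≤ C) ∧ x ∈ TaylorLp r p) := by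
  have habs1 : |r * 1| < 1 := by rw [mul_one, abs_of_pos hr0]; exact hr1
  constructor
  · refine ⟨fun _ => 1, ⟨1, fun k => by simp⟩, ?_, ?_⟩
    · intro n
      have h := taylor_abs_summable r 1 hr0.le habs1 n
      simpa using h
    · have hT : ∀ n, taylorTransform r (fun _ => 1) n = 1 := by
        intro n
        have h := taylor_hasSum r 1 habs1 n
        simp only [one_pow, mul_one, one_mul] at h
        have hne : (1 - r) ^ (n + 1) ≠ 0 := pow_ne_zero _ (by linarith)
        have hv : (1 - r) ^ (n + 1) * (1 / (1 - r) ^ (n + 1)) = 1 := by field_simp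
        rw [hv] at h
        rw [taylorTransform]
        simp only [mul_one]
        exact h.tsum_eq
      intro hs
      have he : (fun n => |taylorTransform r (fun _ => (1 : ℝ)) n| ^ p) = fun _ => (1 : ℝ) := by
        funext n
        rw [hT n, abs_one, Real.one_rpow]
      rw [he] at hs
      exact one_ne_zero (tendsto_nhds_unique tendsto_const_nhds hs.tendsto_atTop_zero)
  · set m := max r (1 - r) with hm
    have hm1 : m < 1 := max_lt hr1 (by linarith)
    have hm0 : 0 < m := lt_max_of_lt_left hr0
    have hm1' : 0 < 1 + m := by linarith
    set t := 2 / (1 + m) with htdef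
    have ht1 : 1 < t := by rw [lt_div_iff₀ hm1']; linarith
    have ht0 : 0 < t := by linarith
    have htm : t * m < 1 := by
      rw [htdef, div_mul_eq_mul_div, div_lt_one hm1']; linarith
    have hrm : r ≤ m := le_max_left _ _
    have h1rm : 1 - r ≤ m := le_max_right _ _
    have hrt : r * t < 1 := by nlinarith
    have h1rt : (1 - r) * t < 1 := by nlinarith
    have h1rt' : (0 : ℝ) < 1 + r * t := by positivity
    have habs : |r * (-t)| < 1 := by
      rw [abs_mul, abs_neg, abs_of_pos hr0, abs_of_pos ht0]; exact hrt
    refine ⟨fun k => (-t) ^ k, ?_, ?_, ?_⟩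
    · rintro ⟨C, hC⟩
      obtain ⟨k, hk⟩ := pow_unbounded_of_one_lt C ht1
      have h := hC k
      simp only [abs_pow, abs_neg, abs_of_pos ht0] at h
      linarith
    · intro n
      exact taylor_abs_summable r (-t) hr0.le habs n
    · set c := (1 - r) / (1 + r * t) with hc
      set q := t * c with hqdef
      have hc0 : 0 < c := div_pos (by linarith) h1rt'
      have hq0 : 0 < q := mul_pos ht0 hc0
      have hq1 : q < 1 := by
        rw [hqdef, hc, mul_div_assoc', div_lt_one h1rt']
        nlinarith
      have hT : ∀ n, |taylorTransform r (fun k => (-t) ^ k) n| = c * q ^ n := by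
        intro n
        have h := (taylor_hasSum r (-t) habs n).tsum_eq
        have h2 : 1 - r * (-t) = 1 + r * t := by ring
        rw [h2] at h
        rw [taylorTransform, h, abs_mul, abs_mul, abs_pow, abs_neg, abs_of_pos ht0,
          abs_pow, abs_of_nonneg (by linarith : (0:ℝ) ≤ 1 - r),
          abs_of_pos (by positivity : (0:ℝ) < 1 / (1 + r * t) ^ (n + 1))]
        rw [hqdef, mul_pow, hc, div_pow]
        have hne : (1 + r * t) ^ (n + 1) ≠ 0 := by positivity
        field_simp
        have hinv : (1 + r * t) * (1 + r * t)⁻¹ = 1 := mul_inv_cancel₀ h1rt'.ne'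
        have hk : (1 + r * t) ^ n * (-(r * (1 + r * t)⁻¹) + (1 + r * t)⁻¹) ^ n = (1 - r) ^ n := by
          rw [← mul_pow]; congr 1; linear_combination (1 - r) * hinv
        linear_combination (-(r * t - r - r ^ 2 * t + 1)) * hk
      have key : ∀ n : ℕ, (c * q ^ n) ^ p = c ^ p * (q ^ p) ^ n := by
        intro n
        rw [Real.mul_rpow hc0.le (pow_nonneg hq0.le n), ← Real.rpow_natCast q n,
          ← Real.rpow_mul hq0.le, mul_comm (n : ℝ) p, Real.rpow_mul hq0.le,
          Real.rpow_natCast]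
      have hs := (summable_geometric_of_lt_one (Real.rpow_nonneg hq0.le p)
        (Real.rpow_lt_one hq0.le hq1 (by linarith))).mul_left (c ^ p)
      apply hs.congr
      intro n
      rw [hT n, key n]
end
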